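/- If (L,U) is a projection pair for the isotonic regression problem on a finite poset X, meaning U is an upper set, L = X \ U, and there exists d ∈ ℝ with (g|_L)*(x) ≤ d ≤ (g|_U)*(z) for all x ∈ L, z ∈ U, then the solution of the weighted least-squares isotonic regression on X restricted to L equals (g|_L)* and restricted to U equals (g|_U)*. In other words, the global isotonic least-squares fit is the union of the separate fits on L and U. -/

import Mathlib

/-- Projection pair theorem: if `(L,U)` is a projection pair (U an upper set,
`L = Uᶜ`, and there is `d` separating the restricted isotonic fits), then the
global weighted least-squares isotonic fit agrees with the restricted fit
`(g|_L)*` on `L` and with `(g|_U)*` on `U`. -/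
theorem stmt7 {α : Type*} [Fintype α] [DecidableEq α] [PartialOrder α]
    (w y : α → ℝ) (hw : ∀ i, 0 < w i)
    (U : Finset α) (hU : ∀ a ∈ U, ∀ b, a ≤ b → b ∈ U)
    (L : Finset α) (hL : L = Uᶜ)
    (gL gU gstar : α → ℝ) (d : ℝ)
    (hgL_iso : ∀ a ∈ L, ∀ b ∈ L, a ≤ b → gL a ≤ gL b)
    (hgL_min : ∀ h : α → ℝ, (∀ a ∈ L, ∀ b ∈ L, a ≤ b → h a ≤ h b) →
      ∑ i ∈ L, w i * (gL i - y i) ^ 2 ≤ ∑ i ∈ L, w i * (h i - y i) ^ 2)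
    (hgU_iso : ∀ a ∈ U, ∀ b ∈ U, a ≤ b → gU a ≤ gU b)
    (hgU_min : ∀ h : α → ℝ, (∀ a ∈ U, ∀ b ∈ U, a ≤ b → h a ≤ h b) →
      ∑ i ∈ U, w i * (gU i - y i) ^ 2 ≤ ∑ i ∈ U, w i * (h i - y i) ^ 2)
    (hdL : ∀ x ∈ L, gL x ≤ d) (hdU : ∀ z ∈ U, d ≤ gU z)
    (hstar_iso : ∀ a b : α, a ≤ b → gstar a ≤ gstar b)
    (hstar_min : ∀ h : α → ℝ, (∀ a b : α, a ≤ b → h a ≤ h b) →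
      ∑ i, w i * (gstar i - y i) ^ 2 ≤ ∑ i, w i * (h i - y i) ^ 2) :
    (∀ x ∈ L, gstar x = gL x) ∧ (∀ z ∈ U, gstar z = gU z) := by
  classical
  set h : α → ℝ := fun i => if i ∈ U then gU i else gL i with hh
  have memL : ∀ i, i ∈ L ↔ i ∉ U := by
    intro i; rw [hL, Finset.mem_compl]
  -- h is globally isotone
  have h_iso : ∀ a b : α, a ≤ b → h a ≤ h b := by
    intro a b hab
    by_cases haU : a ∈ U
    · have hbU : b ∈ U := hU a haU b hab
      simp only [hh, haU, hbU, if_pos]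
      exact hgU_iso a haU b hbU hab
    · have haL : a ∈ L := (memL a).mpr haU
      by_cases hbU : b ∈ U
      · simp only [hh, haU, hbU, if_pos, if_neg, not_false_iff]
        exact le_trans (hdL a haL) (hdU b hbU)
      · have hbL : b ∈ L := (memL b).mpr hbU
        simp only [hh, haU, hbU, if_neg, not_false_iff]
        exact hgL_iso a haL b hbL hab
  -- cost notation
  have split : ∀ f : α → ℝ,
      ∑ i, w i * (f i - y i) ^ 2
        = ∑ i ∈ L, w i * (f i - y i) ^ 2 + ∑ i ∈ U, w i * (f i - y i) ^ 2 := by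
    intro f
    rw [hL]
    exact (Finset.sum_compl_add_sum U _).symm
  have hL_eq : ∀ f : α → ℝ, (∀ i ∈ L, h i = f i) →
      ∑ i ∈ L, w i * (h i - y i) ^ 2 = ∑ i ∈ L, w i * (f i - y i) ^ 2 := by
    intro f hf
    exact Finset.sum_congr rfl (fun i hi => by rw [hf i hi])
  have hcongL : ∑ i ∈ L, w i * (h i - y i) ^ 2 = ∑ i ∈ L, w i * (gL i - y i) ^ 2 :=
    hL_eq gL (fun i hi => by simp [hh, (memL i).mp hi])
  have hcongU : ∑ i ∈ U, w i * (h i - y i) ^ 2 = ∑ i ∈ U, w i * (gU i - y i) ^ 2 :=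
    Finset.sum_congr rfl (fun i hi => by simp [hh, hi])
  -- total costs are equal
  have key1 : ∑ i ∈ L, w i * (gL i - y i) ^ 2 ≤ ∑ i ∈ L, w i * (gstar i - y i) ^ 2 :=
    hgL_min gstar (fun a _ b _ hab => hstar_iso a b hab)
  have key2 : ∑ i ∈ U, w i * (gU i - y i) ^ 2 ≤ ∑ i ∈ U, w i * (gstar i - y i) ^ 2 :=
    hgU_min gstar (fun a _ b _ hab => hstar_iso a b hab)
  have key3 : ∑ i, w i * (gstar i - y i) ^ 2 ≤ ∑ i, w i * (h i - y i) ^ 2 :=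
    hstar_min h h_iso
  have htot : ∑ i, w i * (h i - y i) ^ 2 = ∑ i, w i * (gstar i - y i) ^ 2 := by
    have h1 : ∑ i, w i * (h i - y i) ^ 2
        = ∑ i ∈ L, w i * (gL i - y i) ^ 2 + ∑ i ∈ U, w i * (gU i - y i) ^ 2 := by
      rw [split h, hcongL, hcongU]
    have h2 := split gstar
    linarith [add_le_add key1 key2]
  -- midpoint argument
  set m : α → ℝ := fun i => (gstar i + h i) / 2 with hm
  have m_iso : ∀ a b : α, a ≤ b → m a ≤ m b := by
    intro a b hab
    have := hstar_iso a b hab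
    have := h_iso a b hab
    simp only [hm]; linarith
  have key4 := hstar_min m m_iso
  have midid : ∑ i, w i * (m i - y i) ^ 2
      = (∑ i, w i * (gstar i - y i) ^ 2 + ∑ i, w i * (h i - y i) ^ 2) / 2
        - (∑ i, w i * (gstar i - h i) ^ 2) / 4 := by
    calc ∑ i, w i * (m i - y i) ^ 2
        = ∑ i, ((w i * (gstar i - y i) ^ 2 + w i * (h i - y i) ^ 2) / 2
            - w i * (gstar i - h i) ^ 2 / 4) :=
          Finset.sum_congr rfl (fun i _ => by simp only [hm]; ring)
      _ = _ := by
          rw [Finset.sum_sub_distrib, ← Finset.sum_div, ← Finset.sum_div,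
            Finset.sum_add_distrib]
  have hQ : ∑ i, w i * (gstar i - h i) ^ 2 ≤ 0 := by linarith
  have hQ0 : ∑ i, w i * (gstar i - h i) ^ 2 = 0 :=
    le_antisymm hQ (Finset.sum_nonneg fun i _ =>
      mul_nonneg (hw i).le (sq_nonneg _))
  have heq : ∀ i : α, gstar i = h i := by
    intro i
    have := (Finset.sum_eq_zero_iff_of_nonneg
      (fun j _ => mul_nonneg (hw j).le (sq_nonneg (gstar j - h j)))).mp hQ0 i
      (Finset.mem_univ i)
    have h2 : (gstar i - h i) ^ 2 = 0 := by
      have := hw i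
      nlinarith [this]
    have := pow_eq_zero_iff (n := 2) (by norm_num) |>.mp h2
    linarith
  constructor
  · intro x hx
    have := heq x
    simpa [hh, (memL x).mp hx] using this
  · intro z hz
    have := heq z
    simpa [hh, hz] using this
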